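/- arXiv:2303.11974 — 12 statements merged into one kernel-verified Lean document; each statement's English description precedes it below -/
import Mathlib

section
/- Let a, b, c, d, and e be positive integers, with c prime, satisfying a² + a + 1 = c·d, b² + b + 1 = c·e, and c > d > e. Then c = a + b + 1 and a − b = d − e. -/
/-- If `a, b, c, d, e` are positive integers, `c` prime, `a² + a + 1 = c·d`,
`b² + b + 1 = c·e`, and `c > d > e`, then `c = a + b + 1` and `a − b = d − e`. -/
theorem key_factorization_lemma (a b c d e : ℕ) (ha : 0 < a) (hb : 0 < b) (hd : 0 < d)
    (he : 0 < e) (hc : c.Prime) (h1 : a ^ 2 + a + 1 = c * d) (h2 : b ^ 2 + b + 1 = c * e)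
    (hcd : c > d) (hde : d > e) :
    c = a + b + 1 ∧ (a : ℤ) - b = (d : ℤ) - e := by
  have hA : (a : ℤ) ^ 2 + a + 1 = c * d := by exact_mod_cast h1
  have hB : (b : ℤ) ^ 2 + b + 1 = c * e := by exact_mod_cast h2
  have hcdZ : (d : ℤ) < c := by exact_mod_cast hcd
  have hdeZ : (e : ℤ) < d := by exact_mod_cast hde
  have hc0 : (0 : ℤ) < c := by exact_mod_cast hc.pos
  have hac : (a : ℤ) < c := by nlinarith [sq_nonneg ((a:ℤ) - c)]
  have hbc : (b : ℤ) < c := by nlinarith [sq_nonneg ((b:ℤ) - c)]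
  have hdvd : (c : ℤ) ∣ ((a : ℤ) - b) * ((a : ℤ) + b + 1) := by
    refine ⟨(d : ℤ) - e, by ring_nf; nlinarith⟩
  have hne : (a : ℤ) ≠ b := by
    intro h
    have : (c : ℤ) * d = c * e := by rw [← hA, ← hB, h]
    have : (d : ℤ) = e := by
      exact mul_left_cancel₀ (ne_of_gt hc0) this
    omega
  have hcp : Prime (c : ℤ) := Nat.prime_iff_prime_int.mp hc
  rcases hcp.dvd_mul.mp hdvd with h | h
  · exfalso
    have habs : |(a : ℤ) - b| < c := by
      rw [abs_lt]; constructor <;> [nlinarith; nlinarith]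
    have := Int.le_of_dvd (abs_pos.mpr (sub_ne_zero.mpr hne)) ((dvd_abs _ _).mpr h)
    omega
  · have hge : (c : ℤ) ≤ a + b + 1 := Int.le_of_dvd (by positivity) h
    have hlt : (a : ℤ) + b + 1 < 2 * c := by omega
    have hceq : (c : ℤ) = a + b + 1 := by
      by_contra hne2
      have hd2 : (c:ℤ) ∣ (↑a + ↑b + 1) - ↑c := dvd_sub h (dvd_refl _)
      have hpos : (0:ℤ) < (↑a + ↑b + 1) - ↑c := by omega
      have := Int.le_of_dvd hpos hd2
      omega
    constructor
    · exact_mod_cast hceq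
    · have hmul : ((a : ℤ) - b) * c = ((d : ℤ) - e) * c := by
        linear_combination hA - hB + ((a : ℤ) - b) * hceq
      exact mul_right_cancel₀ (ne_of_gt hc0) hmul
end

section
/- Let a, b, c, and d be positive integers with c > d > 1 and c prime. If a² + a + 1 = c·d and b² + b + 1 = c, then a = b²; in particular, a is not prime. -/
/-- If `a, b, c, d` are positive integers with `c > d > 1`, `c` prime,
`a² + a + 1 = c·d` and `b² + b + 1 = c`, then `a = b²`; in particular `a` is not prime. -/
theorem eq_sq_of_factorizations (a b c d : ℕ) (ha : 0 < a) (hb : 0 < b) (hc : c.Prime)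
    (hcd : c > d) (hd1 : d > 1) (h1 : a ^ 2 + a + 1 = c * d) (h2 : b ^ 2 + b + 1 = c) :
    a = b ^ 2 ∧ ¬ a.Prime := by
  have hc0 : 0 < c := hc.pos
  -- a < c
  have hac : a < c := by nlinarith
  -- b < c
  have hbc : b < c := by nlinarith
  -- c ∣ (a - b)(a + b + 1) over ℤ
  have hdvd : (c : ℤ) ∣ ((a : ℤ) - b) * ((a : ℤ) + b + 1) := by
    have : ((a : ℤ) - b) * ((a : ℤ) + b + 1)
        = ((a : ℤ) ^ 2 + a + 1) - ((b : ℤ) ^ 2 + b + 1) := by ring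
    rw [this]
    have e1 : ((a : ℤ) ^ 2 + a + 1) = (c : ℤ) * d := by exact_mod_cast h1
    have e2 : ((b : ℤ) ^ 2 + b + 1) = (c : ℤ) := by exact_mod_cast h2
    rw [e1, e2]
    exact Dvd.dvd.sub ⟨d, rfl⟩ ⟨1, by ring⟩
  have hcpZ : Prime (c : ℤ) := Nat.prime_iff_prime_int.mp hc
  have habsq : a = b ^ 2 := by
    rcases hcpZ.dvd_mul.mp hdvd with h | h
    · -- c ∣ a - b, so a = b, contradiction with d > 1
      have hab : (a : ℤ) - b = 0 := by
        apply Int.eq_zero_of_abs_lt_dvd h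
        rw [abs_sub_lt_iff]
        constructor <;> push_cast <;> omega
      have : a = b := by omega
      subst this
      have : c * d = c * 1 := by omega
      have : d = 1 := by
        have := Nat.eq_of_mul_eq_mul_left hc0 this
        exact this
      omega
    · -- c ∣ a + b + 1
      have hn : (c : ℤ) ∣ ((a + b + 1 : ℕ) : ℤ) := by push_cast; exact h
      have hn' : c ∣ a + b + 1 := Int.ofNat_dvd.mp hn
      obtain ⟨k, hk⟩ := hn'
      have hklt : c * k < c * 2 := by omega
      have hk2 : k < 2 := Nat.lt_of_mul_lt_mul_left hklt
      have hk0 : k ≠ 0 := by rintro rfl; omega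
      have hk1 : k = 1 := by omega
      subst hk1
      omega
  refine ⟨habsq, ?_⟩
  intro hp
  rw [habsq] at hp
  rcases (hp.eq_one_or_self_of_dvd b ⟨b, by ring⟩) with h | h
  · simp [h] at hp
    exact Nat.not_prime_one hp
  · have : b = 1 := by nlinarith
    simp [this] at hp
    exact Nat.not_prime_one hp
end

section
/- There do not exist primes a, b, c, d, f, each an odd prime greater than 3, with c > d > f, such that a² + a + 1 = c·d and b² + b + 1 = c·f. -/
/-- Any prime `c > 3` dividing `a² + a + 1` is `≡ 1 mod 3`. -/
lemma aux_mod3_one {c a : ℕ} (hc : c.Prime) (h3 : 3 < c) (hdvd : c ∣ a ^ 2 + a + 1) :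
    c % 3 = 1 := by
  haveI : Fact c.Prime := ⟨hc⟩
  set x : ZMod c := (a : ZMod c) with hxdef
  have hx : x ^ 2 + x + 1 = 0 := by
    have : ((a ^ 2 + a + 1 : ℕ) : ZMod c) = 0 := (ZMod.natCast_eq_zero_iff _ _).2 hdvd
    push_cast at this
    linear_combination this
  have hx3 : x ^ 3 = 1 := by linear_combination (x - 1) * hx
  have hxne1 : x ≠ 1 := by
    intro h
    rw [h] at hx
    have h30 : ((3 : ℕ) : ZMod c) = 0 := by push_cast; linear_combination hx
    have := (ZMod.natCast_eq_zero_iff 3 c).1 h30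
    have := Nat.le_of_dvd (by norm_num) this
    omega
  have hxne0 : x ≠ 0 := by
    intro h
    rw [h] at hx3
    simp at hx3
  have hord : orderOf x = 3 := orderOf_eq_prime hx3 hxne1
  have hdvd3 : 3 ∣ c - 1 := hord ▸ ZMod.orderOf_dvd_card_sub_one hxne0
  obtain ⟨k, hk⟩ := hdvd3
  omega

/-- If `a > 3` is prime and `a² + a + 1 = c * d` with primes `c, d > 3`, then `a ≡ 2 mod 3`. -/
lemma aux_a_mod3 {a c d : ℕ} (ha : a.Prime) (ha3 : 3 < a) (hc : c.Prime) (hc3 : 3 < c)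
    (hd : d.Prime) (hd3 : 3 < d) (heq : a ^ 2 + a + 1 = c * d) : a % 3 = 2 := by
  have h0 : a % 3 ≠ 0 := by
    intro h
    have : (3 : ℕ) ∣ a := Nat.dvd_of_mod_eq_zero h
    have := (Nat.prime_dvd_prime_iff_eq (by norm_num) ha).1 this
    omega
  have h1 : a % 3 ≠ 1 := by
    intro h
    have h3dvd : (3 : ℕ) ∣ a ^ 2 + a + 1 := by
      obtain ⟨k, hk⟩ : ∃ k, a = 3 * k + 1 := ⟨a / 3, by omega⟩
      exact ⟨3 * k ^ 2 + 3 * k + 1, by rw [hk]; ring⟩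
    rw [heq] at h3dvd
    rcases (Nat.Prime.dvd_mul (by norm_num)).1 h3dvd with h | h
    · have := (Nat.prime_dvd_prime_iff_eq (by norm_num) hc).1 h; omega
    · have := (Nat.prime_dvd_prime_iff_eq (by norm_num) hd).1 h; omega
  omega

/-- There do not exist odd primes `a, b, c, d, f`, each greater than 3, with `c > d > f`,
such that `a² + a + 1 = c·d` and `b² + b + 1 = c·f`. -/
theorem no_shared_largest_prime_S22 :
    ¬ ∃ a b c d f : ℕ, a.Prime ∧ b.Prime ∧ c.Prime ∧ d.Prime ∧ f.Prime ∧
      Odd a ∧ Odd b ∧ Odd c ∧ Odd d ∧ Odd f ∧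
      3 < a ∧ 3 < b ∧ 3 < c ∧ 3 < d ∧ 3 < f ∧
      c > d ∧ d > f ∧
      a ^ 2 + a + 1 = c * d ∧ b ^ 2 + b + 1 = c * f := by
  rintro ⟨a, b, c, d, f, ha, hb, hc, hd, hf, -, -, -, -, -, ha3, hb3, hc3, hd3, hf3,
    hcd, hdf, heqa, heqb⟩
  -- a, b < c
  have hac : a < c := by nlinarith
  have hbc : b < c := by nlinarith
  -- a ≠ b
  have hab : a ≠ b := by
    intro h
    subst h
    have : d = f := by
      have := heqa.symm.trans heqb
      exact Nat.eq_of_mul_eq_mul_left (by omega) this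
    omega
  -- c ∣ a + b + 1
  have hdvda : (c : ℤ) ∣ (a : ℤ) ^ 2 + a + 1 := by
    exact_mod_cast Int.natCast_dvd_natCast.2 ⟨d, by exact_mod_cast heqa⟩
  have hdvdb : (c : ℤ) ∣ (b : ℤ) ^ 2 + b + 1 := by
    exact_mod_cast Int.natCast_dvd_natCast.2 ⟨f, by exact_mod_cast heqb⟩
  have hdvdprod : (c : ℤ) ∣ ((a : ℤ) - b) * ((a : ℤ) + b + 1) := by
    have : ((a : ℤ) - b) * ((a : ℤ) + b + 1) =
        ((a : ℤ) ^ 2 + a + 1) - ((b : ℤ) ^ 2 + b + 1) := by ring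
    rw [this]
    exact dvd_sub hdvda hdvdb
  have hcZ : Prime (c : ℤ) := Nat.prime_iff_prime_int.mp hc
  have hdvdsum : (c : ℤ) ∣ (a : ℤ) + b + 1 := by
    rcases hcZ.dvd_mul.1 hdvdprod with h | h
    · exfalso
      have : (a : ℤ) - b = 0 := Int.eq_zero_of_abs_lt_dvd h (by
        rw [abs_sub_lt_iff]
        constructor <;> push_cast <;> omega)
      have : a = b := by omega
      exact hab this
    · exact h
  have hdvdsumN : c ∣ a + b + 1 := by
    have := Int.natCast_dvd_natCast.1 (by exact_mod_cast hdvdsum)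
    exact this
  have hceq : c = a + b + 1 := by
    obtain ⟨k, hk⟩ := hdvdsumN
    have hk1 : k = 1 := by nlinarith
    subst hk1
    omega
  -- mod 3 contradiction
  have hc1 : c % 3 = 1 := aux_mod3_one hc hc3 ⟨d, heqa⟩
  have ha2 : a % 3 = 2 := aux_a_mod3 ha ha3 hc hc3 hd hd3 heqa
  have hb2 : b % 3 = 2 := aux_a_mod3 hb hb3 hc hc3 hf hf3 heqb
  omega
end

section
/- Suppose a, b, c, and d are odd primes with c > d and d ≠ 3 satisfying a² + a + 1 = c·d and b² + b + 1 = 3·c. Then there does not exist an odd prime g and a positive integer h, with h = 1 or h an odd prime, such that g² + g + 1 = d·h and d > h. -/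
/-- If `a, b, c, d` are odd primes with `c > d`, `d ≠ 3`, `a² + a + 1 = c·d` and
`b² + b + 1 = 3·c`, then there is no odd prime `g` and positive integer `h`
(with `h = 1` or `h` an odd prime) such that `g² + g + 1 = d·h` and `d > h`. -/
theorem unique_between_S1_and_S2 (a b c d : ℕ)
    (ha : a.Prime) (hb : b.Prime) (hc : c.Prime) (hd : d.Prime)
    (hao : Odd a) (hbo : Odd b) (hco : Odd c) (hdo : Odd d)
    (hcd : c > d) (hd3 : d ≠ 3)
    (h1 : a ^ 2 + a + 1 = c * d) (h2 : b ^ 2 + b + 1 = 3 * c) :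
    ¬ ∃ g h : ℕ, g.Prime ∧ Odd g ∧ (h = 1 ∨ (h.Prime ∧ Odd h)) ∧
      g ^ 2 + g + 1 = d * h ∧ d > h := by
  rintro ⟨g, h, hg, hgo, hh, heq, hdh⟩
  have hd2 : d ≠ 2 := by rintro rfl; exact (by decide : ¬ Odd 2) hdo
  have hd5 : 5 ≤ d := by
    have h2d := hd.two_le
    have h4 : d ≠ 4 := by rintro rfl; norm_num at hd
    omega
  have hc0 : 0 < c := hc.pos
  have hac : a < c := by nlinarith
  have hbc : b < c := by nlinarith
  have hda : d ≤ a := by nlinarith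
  have hgd : g < d := by nlinarith
  have hh1 : 1 ≤ h := by
    rcases hh with rfl | ⟨hp, _⟩
    · exact le_refl 1
    · exact hp.pos
  have hab : a ≠ b := by
    rintro rfl
    have hcd3 : c * d = c * 3 := by omega
    exact hd3 (Nat.eq_of_mul_eq_mul_left hc0 hcd3)
  -- cast to integers
  have h1' : (a:ℤ)^2 + a + 1 = c * d := by exact_mod_cast h1
  have h2' : (b:ℤ)^2 + b + 1 = 3 * c := by exact_mod_cast h2
  have heq' : (g:ℤ)^2 + g + 1 = d * h := by exact_mod_cast heq
  have hCp : Prime (c:ℤ) := Nat.prime_iff_prime_int.mp hc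
  have hDp : Prime (d:ℤ) := Nat.prime_iff_prime_int.mp hd
  -- step 1 : a + b + 1 = c
  have e0 : (c:ℤ) ∣ ((a:ℤ) - b) * ((a:ℤ) + b + 1) :=
    ⟨(d:ℤ) - 3, by linear_combination h1' - h2'⟩
  have h3' : (a:ℤ) + b + 1 = c := by
    rcases hCp.dvd_or_dvd e0 with hdvd | hdvd
    · exfalso
      have hne : (a:ℤ) - b ≠ 0 := by
        intro h0
        exact hab (by exact_mod_cast sub_eq_zero.mp h0)
      have habs : |(a:ℤ) - b| < c := by
        rw [abs_lt]
        constructor <;> push_cast <;> omega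
      exact hne (Int.eq_zero_of_abs_lt_dvd hdvd habs)
    · obtain ⟨k, hk⟩ := hdvd
      have hkpos : 0 < k := by
        by_contra hk0
        push_neg at hk0
        have : (a:ℤ) + b + 1 ≤ 0 := by
          rw [hk]
          exact mul_nonpos_of_nonneg_of_nonpos (by positivity) hk0
        have : (0:ℤ) < (a:ℤ) + b + 1 := by positivity
        omega
      have hklt : k < 2 := by
        by_contra hk2
        push_neg at hk2
        have : 2 * (c:ℤ) ≤ c * k := by
          have : (c:ℤ) * 2 ≤ c * k := by
            apply mul_le_mul_of_nonneg_left hk2 (by positivity)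
          linarith
        have : (a:ℤ) + b + 1 < 2 * c := by push_cast; omega
        omega
      have : k = 1 := by omega
      rw [this, mul_one] at hk
      omega
  -- step 2 : c + d = 2a + 4
  have e4 : (c:ℤ) * ((c:ℤ) + d - 2*a - 4) = 0 := by
    linear_combination (-1 : ℤ) * h1' + h2' - ((b:ℤ) + c - a) * h3'
  have hCD : (c:ℤ) + d - 2*a - 4 = 0 := by
    rcases mul_eq_zero.mp e4 with hbad | hgood
    · exact absurd hbad (by positivity)
    · exact hgood
  -- step 3 : m := a - d satisfies m^2 + m + 1 = 3 d
  set M : ℤ := (a:ℤ) - d with hMdef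
  have hM : M^2 + M + 1 = 3 * d := by
    rw [hMdef]; linear_combination h1' + (d:ℤ) * hCD
  have hM0 : 0 ≤ M := by rw [hMdef]; push_cast; omega
  have hMd : M < d := by
    by_contra hcon
    push_neg at hcon
    have hdle : (5:ℤ) ≤ d := by exact_mod_cast hd5
    have hsq : (d:ℤ) * d ≤ M * M :=
      mul_le_mul hcon hcon (by linarith) (by linarith)
    have h5d : 5 * (d:ℤ) ≤ d * d := mul_le_mul_of_nonneg_right hdle (by linarith)
    have hpow : M ^ 2 = M * M := by ring
    linarith
  have hMeven : Even M := by
    rw [hMdef, Int.even_sub]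
    constructor
    · intro hea; exfalso
      exact (Int.not_odd_iff_even.mpr hea) (by exact_mod_cast hao)
    · intro hed; exfalso
      exact (Int.not_odd_iff_even.mpr hed) (by exact_mod_cast hdo)
  have hGodd : Odd (g:ℤ) := by exact_mod_cast hgo
  have hDodd : Odd (d:ℤ) := by exact_mod_cast hdo
  -- step 4 : d ∣ (g - m)(g + m + 1), derive contradiction
  have e5 : (d:ℤ) ∣ ((g:ℤ) - M) * ((g:ℤ) + M + 1) :=
    ⟨(h:ℤ) - 3, by rw [hMdef]; linear_combination heq' - hM⟩
  rcases hDp.dvd_or_dvd e5 with hdvd | hdvd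
  · -- g - m ≠ 0 (parity), |g - m| < d
    have hne : (g:ℤ) - M ≠ 0 := by
      intro h0
      have : Even ((g:ℤ)) := by
        have : (g:ℤ) = M := by omega
        rw [this]; exact hMeven
      exact (Int.not_odd_iff_even.mpr this) hGodd
    have habs : |(g:ℤ) - M| < d := by
      rw [abs_lt]
      have : (g:ℤ) < d := by exact_mod_cast hgd
      omega
    exact hne (Int.eq_zero_of_abs_lt_dvd hdvd habs)
  · -- g + m + 1 is even, positive, < 2d, so = d : contradiction with d odd
    obtain ⟨k, hk⟩ := hdvd
    have hgd' : (g:ℤ) < d := by exact_mod_cast hgd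
    have hg0 : (0:ℤ) ≤ g := by positivity
    have hd0 : (0:ℤ) < d := by exact_mod_cast hd.pos
    have hsum : (0:ℤ) < (g:ℤ) + M + 1 := by linarith
    have hsum2 : (g:ℤ) + M + 1 < 2 * d := by linarith
    have hkpos : 0 < k := by
      by_contra hk0
      push_neg at hk0
      have : (d:ℤ) * k ≤ 0 := mul_nonpos_of_nonneg_of_nonpos (by linarith) hk0
      omega
    have hklt : k < 2 := by
      by_contra hk2
      push_neg at hk2
      have : (d:ℤ) * 2 ≤ d * k := mul_le_mul_of_nonneg_left hk2 (by linarith)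
      omega
    have hk1 : k = 1 := by omega
    rw [hk1, mul_one] at hk
    have hDeven : Even ((d:ℤ)) := by
      rw [← hk]
      rcases hMeven with ⟨m2, hm2⟩
      rcases hGodd with ⟨g2, hg2⟩
      exact ⟨g2 + m2 + 1, by omega⟩
    exact (Int.not_odd_iff_even.mpr hDeven) hDodd
end

section
/- Let a, b, d, e, and f be positive integers, with a, b, and d prime, satisfying a² + a + 1 = 3·d·e, b² + b + 1 = d·f, and d > e > f. Then d = a + b + 1 and a − b = 3e − f. -/
set_option maxHeartbeats 1000000 in
/-- If `a, b, d` are primes and `e, f` positive integers with `a² + a + 1 = 3·d·e`,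
`b² + b + 1 = d·f` and `d > e > f`, then `d = a + b + 1` and `a − b = 3e − f`. -/
theorem factorization_lemma_two (a b d e f : ℕ)
    (ha : a.Prime) (hb : b.Prime) (hd : d.Prime) (he : 0 < e) (hf : 0 < f)
    (h1 : a ^ 2 + a + 1 = 3 * d * e) (h2 : b ^ 2 + b + 1 = d * f)
    (hde : d > e) (hef : e > f) :
    d = a + b + 1 ∧ (a : ℤ) - b = 3 * (e : ℤ) - f := by
  have hd3 : 3 ≤ d := by omega
  have hdo : d % 2 = 1 := by
    rcases hd.eq_two_or_odd with h | h
    · omega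
    · exact h
  have ha2 : 2 ≤ a := ha.two_le
  have hb2 : 2 ≤ b := hb.two_le
  have hfd : f + 2 ≤ d := by omega
  have hbd : b < d := by nlinarith
  have had : a < 2 * d := by nlinarith
  have h1' : (a:ℤ)^2 + a + 1 = 3*d*e := by exact_mod_cast h1
  have h2' : (b:ℤ)^2 + b + 1 = d*f := by exact_mod_cast h2
  have key : (d : ℤ) ∣ ((a:ℤ) - b) * ((a:ℤ) + b + 1) := by
    refine ⟨3 * e - f, ?_⟩
    linear_combination h1' - h2'
  rcases ((Nat.prime_iff_prime_int.mp hd).dvd_mul).mp key with hc | hc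
  · -- d ∣ a - b
    obtain ⟨k, hk⟩ := hc
    have hdz : (0:ℤ) < d := by exact_mod_cast hd.pos
    have hk1 : k ≤ 1 := by nlinarith [hk]
    have hk0 : 0 ≤ k := by nlinarith [hk]
    interval_cases k
    · -- a = b
      have hab : a = b := by
        have : (a:ℤ) = b := by linarith [hk]
        exact_mod_cast this
      subst hab
      have h3 : 3 * d * e = d * f := by omega
      nlinarith
    · -- a = b + d
      have hab : a = b + d := by
        have : (a:ℤ) - b = d := by linarith [hk]
        omega
      have hbeq : b = 2 := by
        by_contra hb2'
        have hbodd : b % 2 = 1 := by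
          rcases hb.eq_two_or_odd with h | h
          · omega
          · exact h
        have haeven : a % 2 = 0 := by omega
        have : a = 2 := (Nat.Prime.even_iff ha).mp (Nat.even_iff.mpr haeven)
        omega
      subst hbeq
      have h7 : d * f = 7 := by omega
      have hfle : f ≤ 2 := by nlinarith
      interval_cases f
      · have hd7 : d = 7 := by omega
        have : a = 9 := by omega
        rw [this] at ha
        norm_num at ha
      · omega
  · -- d ∣ a + b + 1
    have hc' : d ∣ a + b + 1 := by
      have : (d:ℤ) ∣ ((a + b + 1 : ℕ) : ℤ) := by push_cast; exact hc
      exact_mod_cast this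
    obtain ⟨k, hk⟩ := hc'
    have hk1 : 1 ≤ k := by
      rcases Nat.eq_zero_or_pos k with h | h
      · subst h; simp at hk
      · exact h
    have hk2 : k ≤ 2 := by
      by_contra hcon
      have h3 : 3 ≤ k := by omega
      have h3k : d * 3 ≤ d * k := Nat.mul_le_mul le_rfl h3
      omega
    interval_cases k
    · -- d = a + b + 1
      have hdeq : d = a + b + 1 := by omega
      subst hdeq
      refine ⟨rfl, ?_⟩
      push_cast at h1' h2'
      have key2 : ((a:ℤ) - b - (3*e - f)) * ((a:ℤ) + b + 1) = 0 := by
        linear_combination h1' - h2'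
      rcases mul_eq_zero.mp key2 with h | h
      · linarith
      · have : (0:ℤ) < (a:ℤ) + b + 1 := by positivity
        linarith
    · -- a + b + 1 = 2d
      have hone : a % 2 = 0 ∨ b % 2 = 0 := by omega
      rcases hone with h | h
      · have : a = 2 := (Nat.Prime.even_iff ha).mp (Nat.even_iff.mpr h)
        subst this
        have : 18 ≤ 3 * d * e := by nlinarith
        omega
      · have : b = 2 := (Nat.Prime.even_iff hb).mp (Nat.even_iff.mpr h)
        subst this
        have h7 : d * f = 7 := by omega
        have hfle : f ≤ 2 := by nlinarith
        interval_cases f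
        · have hd7 : d = 7 := by omega
          have ha11 : a = 11 := by omega
          subst hd7; subst ha11
          omega
        · omega
end

section
/- Let a, b, d, e, and f be positive integers, with a, b, and d prime, satisfying a² + a + 1 = 3·d·e, b² + b + 1 = 3·d·f, and d ≥ e > f. Then d = (a + b + 1)/3 (i.e., 3d = a + b + 1) and a − b = e − f. -/
/-- If `a, b, d` are primes and `e, f` positive integers with `a² + a + 1 = 3·d·e`,
`b² + b + 1 = 3·d·f` and `d ≥ e > f`, then `3d = a + b + 1` and `a − b = e − f`. -/
theorem factorization_lemma_three (a b d e f : ℕ)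
    (ha : a.Prime) (hb : b.Prime) (hd : d.Prime) (he : 0 < e) (hf : 0 < f)
    (h1 : a ^ 2 + a + 1 = 3 * d * e) (h2 : b ^ 2 + b + 1 = 3 * d * f)
    (hde : d ≥ e) (hef : e > f) :
    3 * d = a + b + 1 ∧ (a : ℤ) - b = (e : ℤ) - f := by
  -- a ≡ 1 [MOD 3]
  have ha3 : a % 3 = 1 := by
    have hpm := Nat.pow_mod a 2 3
    obtain ⟨m, hm⟩ : ∃ m, a ^ 2 + a + 1 = 3 * m := ⟨d * e, by linarith⟩
    have hc : a % 3 = 0 ∨ a % 3 = 1 ∨ a % 3 = 2 := by omega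
    rcases hc with h | h | h <;> rw [h] at hpm <;> norm_num at hpm <;> omega
  have hb3 : b % 3 = 1 := by
    have hpm := Nat.pow_mod b 2 3
    obtain ⟨m, hm⟩ : ∃ m, b ^ 2 + b + 1 = 3 * m := ⟨d * f, by linarith⟩
    have hc : b % 3 = 0 ∨ b % 3 = 1 ∨ b % 3 = 2 := by omega
    rcases hc with h | h | h <;> rw [h] at hpm <;> norm_num at hpm <;> omega
  -- d ≠ 3
  have hd3 : d ≠ 3 := by
    rintro rfl
    obtain ⟨k, hk⟩ : ∃ k, a = 3 * k + 1 := ⟨a / 3, by omega⟩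
    subst hk
    have hkk : (3*k+1)^2 = 9*(k*k) + 6*k + 1 := by ring
    omega
  -- a > b
  have hab : b < a := by nlinarith
  -- a < 2d
  have ha2d : a < 2 * d := by nlinarith [hd.two_le]
  -- key identity in ℤ
  have h1' : (a : ℤ)^2 + a + 1 = 3 * d * e := by exact_mod_cast h1
  have h2' : (b : ℤ)^2 + b + 1 = 3 * d * f := by exact_mod_cast h2
  have key : ((a : ℤ) - b) * ((a : ℤ) + b + 1) = 3 * d * ((e : ℤ) - f) := by
    linear_combination h1' - h2'
  have hdp : Prime (d : ℤ) := Nat.prime_iff_prime_int.mp hd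
  have hdvd : (d : ℤ) ∣ ((a : ℤ) - b) * ((a : ℤ) + b + 1) := ⟨3 * ((e:ℤ) - f), by linarith [key]⟩
  have hmain : 3 * d = a + b + 1 := by
    rcases hdp.dvd_mul.mp hdvd with hc | hc
    · -- d ∣ a - b : contradiction, forces d = 3
      exfalso
      obtain ⟨k, hk⟩ := hc
      have hk1 : (1 : ℤ) ≤ k := by nlinarith [hd.two_le, (show (0:ℤ) < d by exact_mod_cast hd.pos)]
      have hk2 : k < 2 := by nlinarith [(show (0:ℤ) < d by exact_mod_cast hd.pos), (show (a:ℤ) < 2*d by exact_mod_cast ha2d)]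
      have hk1' : k = 1 := by omega
      subst hk1'
      -- a - b = d, but 3 ∣ a - b
      have h3d : (3 : ℤ) ∣ (d : ℤ) := by
        have : (3 : ℤ) ∣ (a : ℤ) - b := by
          obtain ⟨p, hp⟩ : ∃ p, a = 3 * p + 1 := ⟨a / 3, by omega⟩
          obtain ⟨q, hq⟩ : ∃ q, b = 3 * q + 1 := ⟨b / 3, by omega⟩
          exact ⟨p - q, by push_cast [hp, hq]; ring⟩
        simpa [hk] using this
      have : (3 : ℕ) ∣ d := by exact_mod_cast h3d
      have := (Nat.Prime.eq_one_or_self_of_dvd hd 3 this)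
      omega
    · -- d ∣ a + b + 1, and 3 ∣ a + b + 1, with d ≠ 3
      have hc' : d ∣ a + b + 1 := by
        have := Int.natCast_dvd_natCast.mp (by exact_mod_cast hc : (d:ℤ) ∣ ((a:ℕ) + b + 1 : ℕ))
        exact this
      have h3' : 3 ∣ a + b + 1 := by omega
      have hcop : Nat.Coprime 3 d :=
        (Nat.coprime_primes (by norm_num) hd).mpr (by omega)
      have h3d : 3 * d ∣ a + b + 1 := Nat.Coprime.mul_dvd_of_dvd_of_dvd hcop h3' hc'
      obtain ⟨k, hk⟩ := h3d
      have hk1 : 1 ≤ k := by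
        rcases Nat.eq_zero_or_pos k with h | h
        · subst h; simp at hk
        · exact h
      have hk2 : k < 2 := by nlinarith [hd.two_le]
      have : k = 1 := by omega
      subst this
      omega
  refine ⟨hmain, ?_⟩
  have h3d' : ((a : ℤ) + b + 1) = 3 * d := by exact_mod_cast hmain.symm
  have hdpos : (0 : ℤ) < 3 * d := by
    have := hd.pos; push_cast; positivity
  have := key
  rw [h3d'] at this
  have := mul_right_cancel₀ (ne_of_gt hdpos) (by linarith [this] : ((a:ℤ) - b) * (3 * d) = ((e:ℤ) - f) * (3 * d))
  exact this
end

section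
/- There do not exist pairwise distinct odd primes a, b, c, d, e, f, g satisfying a² + a + 1 = 3·d·e, b² + b + 1 = 3·d·f, c² + c + 1 = 3·d·g, and d ≥ e > f > g. -/
lemma aux_diff (d x y : ℕ) (hd : Odd d) (hx : Odd x) (hy : Odd y) (hxy : x ≠ y)
    (hx2 : x < 2 * d) (hy2 : y < 2 * d) (hdvd : (d : ℤ) ∣ (x : ℤ) - y) : False := by
  obtain ⟨k, hk⟩ := hdvd
  have hdo : Odd (d : ℤ) := by exact_mod_cast hd
  have hxe : Even ((x : ℤ) - y) := by
    have hx' : Odd (x : ℤ) := by exact_mod_cast hx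
    have hy' : Odd (y : ℤ) := by exact_mod_cast hy
    exact hx'.sub_odd hy'
  rw [hk] at hxe
  have hke : Even k := by
    rcases Int.even_mul.mp hxe with h | h
    · exact absurd hdo (Int.not_odd_iff_even.symm.mp h)
    · exact h
  obtain ⟨m, hm⟩ := hke
  subst hm
  have hd0 : (0 : ℤ) < d := by
    have : 0 < d := hd.pos
    exact_mod_cast this
  have hlt : (x : ℤ) - y < 2 * d := by
    have : (x : ℤ) < 2 * d := by exact_mod_cast hx2
    have hy0 : (0 : ℤ) ≤ y := Int.natCast_nonneg y
    linarith
  have hgt : -(2 * (d : ℤ)) < (x : ℤ) - y := by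
    have : (y : ℤ) < 2 * d := by exact_mod_cast hy2
    have hx0 : (0 : ℤ) ≤ x := Int.natCast_nonneg x
    linarith
  have hm1 : m < 1 := by nlinarith
  have hm2 : -1 < m := by nlinarith
  have hm0 : m = 0 := by omega
  subst hm0
  simp at hk
  have : x = y := by exact_mod_cast sub_eq_zero.mp hk
  exact hxy this

/-- There do not exist pairwise distinct odd primes `a, b, c, d, e, f, g` satisfying
`a² + a + 1 = 3·d·e`, `b² + b + 1 = 3·d·f`, `c² + c + 1 = 3·d·g`, and `d ≥ e > f > g`. -/
theorem semi_linked_in_S31 :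
    ¬ ∃ a b c d e f g : ℕ,
      a.Prime ∧ b.Prime ∧ c.Prime ∧ d.Prime ∧ e.Prime ∧ f.Prime ∧ g.Prime ∧
      Odd a ∧ Odd b ∧ Odd c ∧ Odd d ∧ Odd e ∧ Odd f ∧ Odd g ∧
      [a, b, c, d, e, f, g].Pairwise (· ≠ ·) ∧
      a ^ 2 + a + 1 = 3 * d * e ∧
      b ^ 2 + b + 1 = 3 * d * f ∧
      c ^ 2 + c + 1 = 3 * d * g ∧
      d ≥ e ∧ e > f ∧ f > g := by
  rintro ⟨a, b, c, d, e, f, g, pa, pb, pc, pd, pe, pf, pg,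
    oa, ob, oc, od, oe, of', og, hpw, h1, h2, h3, hde, hef, hfg⟩
  simp only [List.pairwise_cons, List.mem_cons, List.mem_singleton,
    List.not_mem_nil, List.mem_nil_iff] at hpw
  have hab : a ≠ b := hpw.1 b (Or.inl rfl)
  have hac : a ≠ c := hpw.1 c (Or.inr (Or.inl rfl))
  have hbc : b ≠ c := hpw.2.1 c (Or.inl rfl)
  -- bounds: a, b, c < 2d
  have he : e ≤ d := hde
  have hf : f ≤ d := by omega
  have hg : g ≤ d := by omega
  have ha2 : a < 2 * d := by nlinarith
  have hb2 : b < 2 * d := by nlinarith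
  have hc2 : c < 2 * d := by nlinarith
  -- d divides x^2+x+1 in ℤ for x = a, b, c
  have da : (d : ℤ) ∣ (a : ℤ) ^ 2 + a + 1 := by
    have : (d : ℕ) ∣ a ^ 2 + a + 1 := h1 ▸ ⟨3 * e, by ring⟩
    exact_mod_cast Int.natCast_dvd_natCast.mpr this
  have db : (d : ℤ) ∣ (b : ℤ) ^ 2 + b + 1 := by
    have : (d : ℕ) ∣ b ^ 2 + b + 1 := h2 ▸ ⟨3 * f, by ring⟩
    exact_mod_cast Int.natCast_dvd_natCast.mpr this
  have dc : (d : ℤ) ∣ (c : ℤ) ^ 2 + c + 1 := by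
    have : (d : ℕ) ∣ c ^ 2 + c + 1 := h3 ▸ ⟨3 * g, by ring⟩
    exact_mod_cast Int.natCast_dvd_natCast.mpr this
  have hdp : Prime (d : ℤ) := Int.prime_iff_natAbs_prime.mpr (by simpa using pd)
  have key : ∀ x y : ℕ, Odd x → Odd y → x ≠ y → x < 2 * d → y < 2 * d →
      (d : ℤ) ∣ (x : ℤ) ^ 2 + x + 1 → (d : ℤ) ∣ (y : ℤ) ^ 2 + y + 1 →
      (d : ℤ) ∣ (x : ℤ) + y + 1 := by
    intro x y hx hy hxy hx2 hy2 dx dy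
    have hsub : (d : ℤ) ∣ ((x : ℤ) - y) * ((x : ℤ) + y + 1) := by
      have heq : ((x : ℤ) - y) * ((x : ℤ) + y + 1)
          = ((x : ℤ) ^ 2 + x + 1) - ((y : ℤ) ^ 2 + y + 1) := by ring
      rw [heq]; exact dvd_sub dx dy
    rcases hdp.dvd_mul.mp hsub with h | h
    · exact absurd h (fun h => aux_diff d x y od hx hy hxy hx2 hy2 h)
    · exact h
  have kab := key a b oa ob hab ha2 hb2 da db
  have kac := key a c oa oc hac ha2 hc2 da dc
  have dbc : (d : ℤ) ∣ (b : ℤ) - c := by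
    have : ((b : ℤ) - c) = ((a : ℤ) + b + 1) - ((a : ℤ) + c + 1) := by ring
    rw [this]; exact dvd_sub kab kac
  exact aux_diff d b c od ob oc hbc hb2 hc2 dbc
end

section
/- There do not exist odd primes a, b, c, d, e, f, g satisfying a² + a + 1 = 3·d·e, b² + b + 1 = 3·d·f, c² + c + 1 = d·g, d ≥ e, d ≥ f, d ≥ g, and e ≠ f. -/
private lemma key_aux (x y c d g : ℕ) (hd2 : 2 ≤ d) (hy2 : 2 ≤ y) (hgp : g.Prime)
    (hcp : c.Prime)
    (hx3 : x % 3 = 1) (hd3 : d % 3 = 1) (hxlt : x < 2 * d) (hclt : c < d)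
    (hmod : x % d = c % d) (hxe : x ^ 2 + x + 1 = 3 * d * y)
    (hce : c ^ 2 + c + 1 = d * g) : False := by
  have hd0 : 0 < d := by omega
  have hdm := Nat.div_add_mod x d
  have hq : x / d < 2 := by
    rw [Nat.div_lt_iff_lt_mul hd0]; omega
  have hcm : c % d = c := Nat.mod_eq_of_lt hclt
  rw [hcm] at hmod
  interval_cases h : x / d
  · -- x = c
    have hx : x = c := by omega
    subst hx
    have h1 : d * (3 * y) = d * g := by
      calc d * (3 * y) = 3 * d * y := by ring
        _ = x ^ 2 + x + 1 := hxe.symm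
        _ = d * g := hce
    have h2 : 3 * y = g := Nat.eq_of_mul_eq_mul_left hd0 h1
    have h3 : (3 : ℕ) ∣ g := ⟨y, h2.symm⟩
    rcases (Nat.Prime.eq_one_or_self_of_dvd hgp 3 h3) with h | h
    · omega
    · omega
  · -- x = d + c
    have hx : x = d + c := by omega
    have hc3 : c % 3 = 0 := by omega
    have h3c : (3 : ℕ) ∣ c := by omega
    rcases (Nat.Prime.eq_one_or_self_of_dvd hcp 3 h3c) with h | h
    · omega
    · -- c = 3, so 13 = d * g
      subst h
      norm_num at hce
      have h13 : Nat.Prime 13 := by norm_num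
      rcases h13.eq_one_or_self_of_dvd d ⟨g, hce⟩ with h | h
      · omega
      · subst h
        have := hgp.two_le
        omega

/-- There do not exist odd primes `a, b, c, d, e, f, g` satisfying `a² + a + 1 = 3·d·e`,
`b² + b + 1 = 3·d·f`, `c² + c + 1 = d·g`, `d ≥ e`, `d ≥ f`, `d ≥ g`, and `e ≠ f`. -/
theorem semi_linked_between_S22_and_S31 :
    ¬ ∃ a b c d e f g : ℕ,
      a.Prime ∧ b.Prime ∧ c.Prime ∧ d.Prime ∧ e.Prime ∧ f.Prime ∧ g.Prime ∧
      Odd a ∧ Odd b ∧ Odd c ∧ Odd d ∧ Odd e ∧ Odd f ∧ Odd g ∧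
      a ^ 2 + a + 1 = 3 * d * e ∧
      b ^ 2 + b + 1 = 3 * d * f ∧
      c ^ 2 + c + 1 = d * g ∧
      d ≥ e ∧ d ≥ f ∧ d ≥ g ∧ e ≠ f := by
  rintro ⟨a, b, c, d, e, f, g, ha, hb, hc, hd, he, hf, hg,
    hoa, hob, hoc, hod, hoe, hof, hog, h1, h2, h3, hde, hdf, hdg, hef⟩
  haveI : Fact d.Prime := ⟨hd⟩
  have hd2 := hd.two_le
  -- a ≡ 1, b ≡ 1 mod 3
  have hmod3 : ∀ x k : ℕ, x ^ 2 + x + 1 = 3 * d * k → x % 3 = 1 := by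
    intro x k hx
    have hcast : (x : ZMod 3) ^ 2 + (x : ZMod 3) + 1 = 0 := by
      have := congrArg (fun n : ℕ => (n : ZMod 3)) hx
      push_cast at this
      rw [this]
      rw [show ((3 : ZMod 3)) = 0 by decide]
      ring
    have h1 : (x : ZMod 3) = ((1 : ℕ) : ZMod 3) := by
      push_cast
      revert hcast
      generalize (x : ZMod 3) = z
      revert z; decide
    have := (ZMod.natCast_eq_natCast_iff _ _ _).mp h1
    simpa [Nat.ModEq] using this
  have ha3 : a % 3 = 1 := hmod3 a e h1
  have hb3 : b % 3 = 1 := hmod3 b f h2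
  -- d ≠ 3
  have hdne3 : d ≠ 3 := by
    intro hdd
    subst hdd
    obtain ⟨k, hk⟩ : ∃ k, a = 3 * k + 1 := ⟨a / 3, by omega⟩
    subst hk
    have h9 : 3 * (3 * k ^ 2 + 3 * k + 1) = 3 * (3 * e) := by ring_nf; ring_nf at h1; linarith
    have h9' : 3 * k ^ 2 + 3 * k + 1 = 3 * e := by omega
    generalize k ^ 2 = K at h9'
    omega
  -- cast equations into ZMod d
  have hz : ∀ x k : ℕ, x ^ 2 + x + 1 = 3 * d * k →
      (x : ZMod d) ^ 2 + (x : ZMod d) + 1 = 0 := by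
    intro x k hx
    have := congrArg (fun n : ℕ => (n : ZMod d)) hx
    push_cast at this
    rw [this, ZMod.natCast_self]
    ring
  have hza : (a : ZMod d) ^ 2 + (a : ZMod d) + 1 = 0 := hz a e h1
  have hzb : (b : ZMod d) ^ 2 + (b : ZMod d) + 1 = 0 := hz b f h2
  have hzc : (c : ZMod d) ^ 2 + (c : ZMod d) + 1 = 0 := by
    have := congrArg (fun n : ℕ => (n : ZMod d)) h3
    push_cast at this
    rw [this, ZMod.natCast_self]
    ring
  -- d ≡ 1 mod 3
  have hd3 : d % 3 = 1 := by
    have hx1 : (a : ZMod d) ≠ 1 := by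
      intro h
      rw [h] at hza
      norm_num at hza
      have : ((3 : ℕ) : ZMod d) = 0 := by push_cast; linear_combination hza
      have hdvd : d ∣ 3 := (ZMod.natCast_eq_zero_iff 3 d).mp this
      rcases (Nat.Prime.eq_one_or_self_of_dvd (by norm_num : Nat.Prime 3) d hdvd) with h' | h' <;> omega
    have hx0 : (a : ZMod d) ≠ 0 := by
      intro h
      rw [h] at hza
      norm_num at hza
    have hx3 : (a : ZMod d) ^ 3 = 1 := by linear_combination ((a : ZMod d) - 1) * hza
    haveI : Fact (Nat.Prime 3) := ⟨by norm_num⟩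
    have horder : orderOf (a : ZMod d) = 3 := orderOf_eq_prime hx3 hx1
    have hpow := ZMod.pow_card_sub_one_eq_one hx0
    have hdvd : orderOf (a : ZMod d) ∣ d - 1 := orderOf_dvd_of_pow_eq_one hpow
    rw [horder] at hdvd
    omega
  -- bounds
  have hbound : ∀ x k : ℕ, x ^ 2 + x + 1 = 3 * d * k → k ≤ d → x < 2 * d := by
    intro x k hx hk
    by_contra hcon
    push_neg at hcon
    nlinarith [hx, hk, hd2]
  have had : a < 2 * d := hbound a e h1 hde
  have hbd : b < 2 * d := hbound b f h2 hdf
  have hcd : c < d := by nlinarith [h3, hdg, hd2]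
  -- a and b are distinct mod d
  have hab : (a : ZMod d) ≠ (b : ZMod d) := by
    intro h
    have hm : a % d = b % d := (ZMod.natCast_eq_natCast_iff _ _ _).mp h
    have h1a := Nat.div_add_mod a d
    have h1b := Nat.div_add_mod b d
    have hqa : a / d < 2 := by rw [Nat.div_lt_iff_lt_mul (by omega)]; omega
    have hqb : b / d < 2 := by rw [Nat.div_lt_iff_lt_mul (by omega)]; omega
    have hab' : a = b := by
      interval_cases h : a / d <;> interval_cases h' : b / d <;> omega
    subst hab'
    have : 3 * d * e = 3 * d * f := by rw [← h1, ← h2]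
    exact hef (Nat.eq_of_mul_eq_mul_left (by omega) this)
  -- c is congruent to a or b mod d
  have hroot : ∀ x y : ZMod d, x ^ 2 + x + 1 = 0 → y ^ 2 + y + 1 = 0 → x ≠ y →
      x + y + 1 = 0 := by
    intro x y hx hy hne
    have h : (x - y) * (x + y + 1) = 0 := by linear_combination hx - hy
    rcases mul_eq_zero.mp h with h | h
    · exact absurd (sub_eq_zero.mp h) hne
    · exact h
  by_cases hca : (a : ZMod d) = (c : ZMod d)
  · exact key_aux a e c d g hd2 he.two_le hg hc ha3 hd3 had hcd
      ((ZMod.natCast_eq_natCast_iff _ _ _).mp hca) h1 h3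
  by_cases hcb : (b : ZMod d) = (c : ZMod d)
  · exact key_aux b f c d g hd2 hf.two_le hg hc hb3 hd3 hbd hcd
      ((ZMod.natCast_eq_natCast_iff _ _ _).mp hcb) h2 h3
  have hA := hroot _ _ hza hzc hca
  have hB := hroot _ _ hzb hzc hcb
  exact hab (by linear_combination hA - hB)
end

section
/- There do not exist odd primes a, b, d, and e satisfying a² + a + 1 = 3·d·e, b² + b + 1 = d, and d ≥ e. -/
set_option maxHeartbeats 1600000 in
/-- There do not exist odd primes `a, b, d, e` satisfying `a² + a + 1 = 3·d·e`,
`b² + b + 1 = d`, and `d ≥ e`. -/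
theorem unique_between_S1_and_S31 :
    ¬ ∃ a b d e : ℕ,
      a.Prime ∧ b.Prime ∧ d.Prime ∧ e.Prime ∧
      Odd a ∧ Odd b ∧ Odd d ∧ Odd e ∧
      a ^ 2 + a + 1 = 3 * d * e ∧
      b ^ 2 + b + 1 = d ∧
      d ≥ e := by
  rintro ⟨a, b, d, e, ha, hb, hd, he, hoa, hob, hod, hoe, h1, h2, hde⟩
  rw [Nat.odd_iff] at hoa hob hod hoe
  have ha2 := ha.two_le
  have hb2 := hb.two_le
  have hd2 := hd.two_le
  have he2 := he.two_le
  have ha3 : 3 ≤ a := by omega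
  have hb3 : 3 ≤ b := by omega
  -- e ≠ 3 via mod 9
  have he3 : e ≠ 3 := by
    intro h3
    subst h3
    have hcast : ((a ^ 2 + a + 1 : ℕ) : ZMod 9) = ((3 * d * 3 : ℕ) : ZMod 9) := by rw [h1]
    push_cast at hcast
    have h0 : (3 : ZMod 9) * (d : ZMod 9) * 3 = 0 := by
      have h9 : (9 : ZMod 9) = 0 := rfl
      linear_combination (d : ZMod 9) * h9
    have hnz : ∀ x : ZMod 9, x ^ 2 + x + 1 ≠ 0 := by decide
    exact hnz a (by rw [hcast, h0])
  have he5 : 5 ≤ e := by omega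
  -- size facts
  have hbd : b < d := by nlinarith
  have h15 : 15 * d ≤ a ^ 2 + a + 1 := by nlinarith
  have h3b : 3 * b ≤ a := by
    by_contra hc
    push_neg at hc
    have h' : a + 1 ≤ 3 * b := hc
    have := Nat.mul_le_mul h' h'
    nlinarith
  have h3d2 : a ^ 2 + a + 1 ≤ 3 * d * d := by
    rw [h1]
    exact Nat.mul_le_mul_left _ hde
  have h3d : a + b + 1 < 3 * d := by
    by_contra hc
    push_neg at hc
    have h9d := Nat.mul_le_mul hc hc
    have h9b := Nat.mul_le_mul h3b h3b
    have hab := Nat.mul_le_mul_right a h3b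
    nlinarith
  have hda : a < 2 * d := by
    by_contra hc
    push_neg at hc
    have := Nat.mul_le_mul hc hc
    nlinarith
  -- divisibility
  have hdZ : Prime (d : ℤ) := Nat.prime_iff_prime_int.mp hd
  have hdpos : (0 : ℤ) < d := by exact_mod_cast hd.pos
  have h1' : (a : ℤ) ^ 2 + a + 1 = 3 * d * e := by exact_mod_cast h1
  have h2' : (b : ℤ) ^ 2 + b + 1 = d := by exact_mod_cast h2
  have hdvd : (d : ℤ) ∣ ((a : ℤ) - b) * ((a : ℤ) + b + 1) := by
    refine ⟨3 * e - 1, ?_⟩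
    linear_combination h1' - h2'
  rcases hdZ.dvd_mul.mp hdvd with hcase | hcase
  · -- d ∣ a - b
    obtain ⟨k, hk⟩ := hcase
    have hub : (d : ℤ) * k < (d : ℤ) * 2 := by
      rw [← hk]
      have h1b : (a : ℤ) < 2 * d := by exact_mod_cast hda
      have h2b : (0 : ℤ) ≤ (b : ℤ) := by positivity
      linarith
    have hlb : (d : ℤ) * (-1) < (d : ℤ) * k := by
      rw [← hk]
      have h1b : (b : ℤ) < d := by exact_mod_cast hbd
      have h2b : (0 : ℤ) ≤ (a : ℤ) := by positivity
      linarith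
    have hk2 : k < 2 := lt_of_mul_lt_mul_left hub hdpos.le
    have hk1 : (-1 : ℤ) < k := lt_of_mul_lt_mul_left hlb hdpos.le
    have hk01 : k = 0 ∨ k = 1 := by omega
    rcases hk01 with rfl | rfl
    · -- a = b
      have hab : a = b := by
        have : (a : ℤ) = b := by linarith [hk]
        exact_mod_cast this
      subst hab
      have hge : 3 * d * 5 ≤ 3 * d * e := Nat.mul_le_mul_left _ he5
      linarith
    · -- a = b + d = (b+1)^2
      have hA : (a : ℤ) = (b : ℤ) + d := by linarith [hk]
      have hA' : a = b + d := by exact_mod_cast hA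
      have hf : a = (b + 1) * (b + 1) := by
        rw [hA', ← h2]
        ring
      rcases (Nat.Prime.eq_one_or_self_of_dvd ha (b + 1) ⟨b + 1, hf⟩) with h | h
      · omega
      · rw [h] at hf
        have hmul : 3 * a ≤ a * a := Nat.mul_le_mul_right a ha3
        linarith
  · -- d ∣ a + b + 1
    obtain ⟨k, hk⟩ := hcase
    have hub : (d : ℤ) * k < (d : ℤ) * 3 := by
      rw [← hk]
      have : ((a + b + 1 : ℕ) : ℤ) < ((3 * d : ℕ) : ℤ) := by exact_mod_cast h3d
      push_cast at this
      linarith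
    have hlb : (d : ℤ) * 0 < (d : ℤ) * k := by
      rw [← hk]
      have h2b : (0 : ℤ) ≤ (a : ℤ) := by positivity
      have h3bz : (0 : ℤ) ≤ (b : ℤ) := by positivity
      linarith
    have hk3 : k < 3 := lt_of_mul_lt_mul_left hub hdpos.le
    have hk0 : (0 : ℤ) < k := lt_of_mul_lt_mul_left hlb hdpos.le
    have hk12 : k = 1 ∨ k = 2 := by omega
    rcases hk12 with rfl | rfl
    · -- a + b + 1 = d, so a = b^2
      have hA : (a : ℤ) + b + 1 = d := by linarith [hk]
      have hA' : a + b + 1 = d := by exact_mod_cast hA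
      have h2'' : b * b + b + 1 = d := by rw [← h2]; ring
      have hf : a = b * b := by linarith
      rcases (Nat.Prime.eq_one_or_self_of_dvd ha b ⟨b, hf⟩) with h | h
      · omega
      · rw [← h] at hf
        have hmul : 3 * b ≤ b * b := Nat.mul_le_mul_right b hb3
        linarith
    · -- a + b + 1 = 2d, parity contradiction
      have hA : (a : ℤ) + b + 1 = 2 * d := by linarith [hk]
      have hA' : a + b + 1 = 2 * d := by exact_mod_cast hA
      omega
end

section
/- There do not exist odd primes a, b, d, and e satisfying a² + a + 1 = 3·d·e, b² + b + 1 = 3·d, and d ≥ e. -/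
/-- There do not exist odd primes `a, b, d, e` satisfying `a² + a + 1 = 3·d·e`,
`b² + b + 1 = 3·d`, and `d ≥ e`. -/
theorem unique_between_S21_and_S31 :
    ¬ ∃ a b d e : ℕ,
      a.Prime ∧ b.Prime ∧ d.Prime ∧ e.Prime ∧
      Odd a ∧ Odd b ∧ Odd d ∧ Odd e ∧
      a ^ 2 + a + 1 = 3 * d * e ∧
      b ^ 2 + b + 1 = 3 * d ∧
      d ≥ e := by
  rintro ⟨a, b, d, e, hpa, hpb, hpd, hpe, hoa, hob, hod, hoe, ha, hb, hde⟩
  have ha2 : 2 ≤ a := hpa.two_le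
  have hb2 : 2 ≤ b := hpb.two_le
  have hd2 : 2 ≤ d := hpd.two_le
  have he2 : 2 ≤ e := hpe.two_le
  -- b ≡ 1 mod 3
  have hb3 : b % 3 = 1 := by
    have h1 : (b^2 + b + 1) % 3 = 0 := by omega
    have hp : b^2 % 3 = (b % 3)^2 % 3 := Nat.pow_mod b 2 3
    have h2 : b % 3 = 0 ∨ b % 3 = 1 ∨ b % 3 = 2 := by omega
    rcases h2 with h|h|h <;> rw [h] at hp <;> omega
  obtain ⟨n, hn⟩ := hob
  have hb7 : 7 ≤ b := by omega
  have hd3 : 3 ≤ d := by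
    rcases hod with ⟨p, hp⟩; omega
  have hbd : b < d := by nlinarith
  have had : a < 2 * d := by
    by_contra h
    push_neg at h
    nlinarith
  -- cast to ℤ
  have haZ : (a:ℤ)^2 + a + 1 = 3 * d * e := by exact_mod_cast ha
  have hbZ : (b:ℤ)^2 + b + 1 = 3 * d := by exact_mod_cast hb
  have hdp : Prime (d:ℤ) := Nat.prime_iff_prime_int.mp hpd
  have key : ((a:ℤ) - b) * ((a:ℤ) + b + 1) = 3 * d * (e - 1) := by
    linear_combination haZ - hbZ
  have hdvd : (d:ℤ) ∣ ((a:ℤ) - b) * ((a:ℤ) + b + 1) := ⟨3 * ((e:ℤ) - 1), by rw [key]; ring⟩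
  obtain ⟨m, hm⟩ := hoa
  have hd2ndvd : ¬ ((d:ℤ) ∣ 2) := by
    intro hdd
    have := Int.le_of_dvd (by norm_num) hdd
    omega
  rcases hdp.dvd_mul.mp hdvd with hc1 | hc2
  · -- d ∣ a - b ; a - b is even, d odd, so 2d ∣ a - b; |a-b| < 2d so a = b
    have hev : (2:ℤ) ∣ ((a:ℤ) - b) := ⟨(m:ℤ) - n, by push_cast [hm, hn]; ring⟩
    obtain ⟨t, ht⟩ := hev
    have hdt : (d:ℤ) ∣ t := by
      rcases hdp.dvd_mul.mp (ht ▸ hc1) with h | h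
      · exact absurd h hd2ndvd
      · exact h
    obtain ⟨s, hs⟩ := hdt
    have hab : (a:ℤ) = b := by
      have hs0 : s = 0 := by
        by_contra h0
        have h1 : (1:ℤ) ≤ s ∨ s ≤ -1 := by omega
        have hdpos : (0:ℤ) < d := by exact_mod_cast (by omega : 0 < d)
        have hbd' : (b:ℤ) < d := by exact_mod_cast hbd
        have had' : (a:ℤ) < 2 * d := by exact_mod_cast had
        have ha2' : (2:ℤ) ≤ a := by exact_mod_cast ha2
        have hb2' : (2:ℤ) ≤ b := by exact_mod_cast hb2
        rcases h1 with h1 | h1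
        · have h2 : (d:ℤ) ≤ d * s := le_mul_of_one_le_right hdpos.le h1
          linarith [ht, hs]
        · have h2 : (d:ℤ) * s ≤ d * (-1) := mul_le_mul_of_nonneg_left h1 hdpos.le
          linarith [ht, hs]
      rw [hs, hs0] at ht
      linarith [ht]
    have hab' : a = b := by exact_mod_cast hab
    rw [hab', hb] at ha
    have h2 : 3 * d * 2 ≤ 3 * d * e := Nat.mul_le_mul_left (3 * d) he2
    have h3 : 3 * d * e = 3 * d := ha.symm
    nlinarith
  · -- d ∣ a + b + 1 ; a+b+1 odd, 0 < a+b+1 < 3d ⇒ a+b+1 = d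
    obtain ⟨k, hk⟩ := hc2
    have hoddk : Odd k := by
      have hodds : Odd ((a:ℤ) + b + 1) := ⟨(m:ℤ) + n + 1, by push_cast [hm, hn]; ring⟩
      rw [hk] at hodds
      exact (Int.odd_mul.mp hodds).2
    have hk1 : k = 1 := by
      have hdpos : (0:ℤ) < d := by exact_mod_cast (by omega : 0 < d)
      have hbd' : (b:ℤ) < d := by exact_mod_cast hbd
      have had' : (a:ℤ) < 2 * d := by exact_mod_cast had
      have ha2' : (2:ℤ) ≤ a := by exact_mod_cast ha2
      have hb2' : (2:ℤ) ≤ b := by exact_mod_cast hb2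
      have hk1' : 1 ≤ k := by
        by_contra h0
        push_neg at h0
        have h2 : (d:ℤ) * k ≤ d * 0 := mul_le_mul_of_nonneg_left (by omega) hdpos.le
        linarith
      have hk3' : k < 3 := by
        by_contra h0
        push_neg at h0
        have h2 : (d:ℤ) * 3 ≤ d * k := mul_le_mul_of_nonneg_left (by omega) hdpos.le
        linarith
      obtain ⟨j, hj⟩ := hoddk
      omega
    rw [hk1, mul_one] at hk
    -- now a + b + 1 = d; derive 3e = d - 2b + 2
    have hA : (a:ℤ) = d - b - 1 := by linarith
    have h5 : (d:ℤ) * (3 * e) = d * ((d:ℤ) - 2 * b + 2) := by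
      rw [hA] at haZ
      linear_combination -haZ + hbZ
    have hdne : (d:ℤ) ≠ 0 := by positivity
    have h6 : (3:ℤ) * e = (d:ℤ) - 2 * b + 2 := mul_left_cancel₀ hdne h5
    have h7 : (9:ℤ) * e = (b:ℤ)^2 - 5 * b + 7 := by linear_combination 3 * h6 - hbZ
    -- b = 3k+1
    obtain ⟨q, hq⟩ : ∃ q, b = 3 * q + 1 := ⟨b / 3, by omega⟩
    have h8 : (9:ℤ) ∣ 3 := ⟨(e:ℤ) - q^2 + q, by rw [hq] at h7; push_cast at h7 ⊢; linarith⟩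
    norm_num at h8
end

section
/- Let a, b, d, and f be odd primes with d > f > 3 satisfying a² + a + 1 = d·f and b² + b + 1 = 3·d. Then there do not exist odd primes c and g with f > g such that c² + c + 1 = 3·f·g. -/
private lemma mod3_of_eq (x y : ℕ) (h : x ^ 2 + x + 1 = 3 * y) : x % 3 = 1 := by
  have hsq : x ^ 2 % 3 = (x % 3) ^ 2 % 3 := Nat.pow_mod x 2 3
  obtain ⟨s, hs⟩ : ∃ s, x ^ 2 = s := ⟨_, rfl⟩
  rw [hs] at hsq h
  have h0 : x % 3 = 0 ∨ x % 3 = 1 ∨ x % 3 = 2 := by omega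
  rcases h0 with h0 | h0 | h0 <;> rw [h0] at hsq <;> norm_num at hsq <;> omega

private lemma root_split (p x y : ℕ) (hp : p.Prime) (hx : p ∣ x ^ 2 + x + 1)
    (hy : p ∣ y ^ 2 + y + 1) : x % p = y % p ∨ p ∣ (x + y + 1) := by
  have hx' : (p:ℤ) ∣ (x:ℤ) ^ 2 + x + 1 := by exact_mod_cast hx
  have hy' : (p:ℤ) ∣ (y:ℤ) ^ 2 + y + 1 := by exact_mod_cast hy
  have hmul : (p:ℤ) ∣ ((x:ℤ) - y) * ((x:ℤ) + y + 1) := by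
    have h := dvd_sub hx' hy'
    have heq : (x:ℤ) ^ 2 + x + 1 - ((y:ℤ) ^ 2 + y + 1) = ((x:ℤ) - y) * ((x:ℤ) + y + 1) := by
      ring
    rwa [heq] at h
  have hpZ : Prime (p:ℤ) := Nat.prime_iff_prime_int.mp hp
  rcases hpZ.dvd_mul.mp hmul with h | h
  · left
    have : y ≡ x [MOD p] := (Nat.modEq_iff_dvd).mpr h
    exact this.symm
  · right
    have : (p:ℤ) ∣ ((x + y + 1 : ℕ) : ℤ) := by push_cast; exact h
    exact_mod_cast this

private lemma lt_of_factor (x p q : ℕ) (hq : q < p) (h : x ^ 2 + x + 1 = p * q) : x < p := by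
  by_contra hcon
  push_neg at hcon
  have h' : p * p ≤ x * x := Nat.mul_le_mul hcon hcon
  have h'' : p * (q + 1) ≤ p * p := Nat.mul_le_mul le_rfl (by omega)
  nlinarith

private lemma c_bound (f g c : ℕ) (hf5 : 5 ≤ f) (hgf : g + 2 ≤ f)
    (hcg : c ^ 2 + c + 1 = 3 * f * g) : c < 2 * f := by
  by_contra hcon
  push_neg at hcon
  have h' : (2 * f) * (2 * f) ≤ c * c := Nat.mul_le_mul hcon hcon
  have h'' : (3 * f) * (g + 2) ≤ (3 * f) * f := Nat.mul_le_mul le_rfl hgf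
  nlinarith

private lemma e_bound (f e : ℕ) (hf5 : 5 ≤ f) (he : 3 * f = e ^ 2 + e + 1) : e < f := by
  by_contra hcon
  push_neg at hcon
  have h' : f * f ≤ e * e := Nat.mul_le_mul hcon hcon
  have h'' : 5 * f ≤ f * f := Nat.mul_le_mul hf5 le_rfl
  nlinarith

set_option maxHeartbeats 1000000 in
/-- If `a, b, d, f` are odd primes with `d > f > 3`, `a² + a + 1 = d·f` and
`b² + b + 1 = 3·d`, then there do not exist odd primes `c` and `g` with `f > g`
such that `c² + c + 1 = 3·f·g`. -/
theorem small_factor_of_pair_not_S31 (a b d f : ℕ)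
    (ha : a.Prime) (hb : b.Prime) (hd : d.Prime) (hf : f.Prime)
    (hao : Odd a) (hbo : Odd b) (hdo : Odd d) (hfo : Odd f)
    (hdf : d > f) (hf3 : f > 3)
    (h1 : a ^ 2 + a + 1 = d * f) (h2 : b ^ 2 + b + 1 = 3 * d) :
    ¬ ∃ c g : ℕ, c.Prime ∧ g.Prime ∧ Odd c ∧ Odd g ∧ f > g ∧
      c ^ 2 + c + 1 = 3 * f * g := by
  rintro ⟨c, g, hc, hg, hco, hgo, hfg, hcg⟩
  have hb3 : b % 3 = 1 := mod3_of_eq b d h2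
  have hc3 : c % 3 = 1 := mod3_of_eq c (f * g) (by rw [hcg]; ring)
  have hb2 := hb.two_le
  obtain ⟨e, rfl⟩ : ∃ e, b = e + 3 := ⟨b - 3, by omega⟩
  have hf2 := Nat.odd_iff.mp hfo
  have hf5 : 5 ≤ f := by have := hf.two_le; omega
  have hd0 : 0 < d := hd.pos
  have had : a < d := lt_of_factor a d f hdf h1
  have hbd : e + 3 < d := by
    refine lt_of_factor (e + 3) d 3 (by omega) ?_
    rw [h2]; ring
  have hdvd1 : d ∣ a ^ 2 + a + 1 := ⟨f, h1⟩
  have hdvd2 : d ∣ (e + 3) ^ 2 + (e + 3) + 1 := ⟨3, by linarith⟩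
  -- a + b + 1 = d
  obtain rfl : d = a + e + 4 := by
    rcases root_split d a (e + 3) hd hdvd1 hdvd2 with h | h
    · rw [Nat.mod_eq_of_lt had, Nat.mod_eq_of_lt hbd] at h
      subst h
      have hdf3 : d * f = d * 3 := by rw [← h1, h2]; ring
      have := Nat.eq_of_mul_eq_mul_left hd0 hdf3
      omega
    · obtain ⟨k, hk⟩ := h
      have hk2 : d * k < d * 2 := by rw [← hk]; omega
      have hklt : k < 2 := Nat.lt_of_mul_lt_mul_left hk2
      have hk0 : k ≠ 0 := by rintro rfl; omega
      have hk1 : k = 1 := by omega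
      rw [hk1] at hk
      omega
  -- 3 f = e^2 + e + 1
  have he : 3 * f = e ^ 2 + e + 1 := by
    have hcan : (a + e + 4) * (3 * f) = (a + e + 4) * (e ^ 2 + e + 1) := by
      have e1 : (a:ℤ) ^ 2 + a + 1 = ((a:ℤ) + e + 4) * f := by exact_mod_cast h1
      have e2 : ((e:ℤ) + 3) ^ 2 + ((e:ℤ) + 3) + 1 = 3 * ((a:ℤ) + e + 4) := by exact_mod_cast h2
      have hZ : ((a:ℤ) + e + 4) * (3 * f) = ((a:ℤ) + e + 4) * ((e:ℤ) ^ 2 + e + 1) := by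
        linear_combination (-3 : ℤ) * e1 - ((a:ℤ) + e + 1) * e2
      exact_mod_cast hZ
    exact Nat.eq_of_mul_eq_mul_left (by omega) hcan
  have he3 : e % 3 = 1 := by omega
  have hf3m : f % 3 = 1 := by
    obtain ⟨k, hk⟩ : ∃ k, e = 3 * k + 1 := ⟨e / 3, by omega⟩
    obtain ⟨m, hm⟩ : ∃ m, f = 3 * m + 1 := by
      refine ⟨k ^ 2 + k, ?_⟩
      rw [hk] at he
      ring_nf at he ⊢
      linarith
    omega
  have helt : e < f := e_bound f e hf5 he
  have hg2 := hg.two_le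
  have hgodd := Nat.odd_iff.mp hgo
  have hclt : c < 2 * f := c_bound f g c hf5 (by omega) hcg
  have hfc : f ∣ c ^ 2 + c + 1 := ⟨3 * g, by rw [hcg]; ring⟩
  have hfe : f ∣ e ^ 2 + e + 1 := ⟨3, by linarith⟩
  rcases root_split f c e hf hfc hfe with h | h
  · rw [Nat.mod_eq_of_lt helt] at h
    have hdm := Nat.div_add_mod c f
    rw [h] at hdm
    obtain ⟨q, hqe⟩ : ∃ q, c / f = q := ⟨_, rfl⟩
    rw [hqe] at hdm
    have hq2 : f * q < f * 2 := by linarith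
    have hqlt : q < 2 := Nat.lt_of_mul_lt_mul_left hq2
    have hq01 : q = 0 ∨ q = 1 := by omega
    rcases hq01 with hq | hq
    · -- c = e, so g = 1 : impossible
      rw [hq] at hdm
      have hce : c = e := by omega
      subst hce
      have h6 : (3 * f) * 2 ≤ (3 * f) * g := Nat.mul_le_mul le_rfl hg2
      nlinarith [hcg, he]
    · rw [hq] at hdm
      -- c = f + e : contradicts c ≡ 1 mod 3
      omega
  · obtain ⟨k, hk⟩ := h
    have hk3 : f * k < f * 3 := by
      rw [← hk]; omega
    have hklt : k < 3 := Nat.lt_of_mul_lt_mul_left hk3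
    have hk0 : k ≠ 0 := by rintro rfl; omega
    have hk12 : k = 1 ∨ k = 2 := by omega
    rcases hk12 with hk' | hk' <;> rw [hk'] at hk <;> omega
end

section
/- Let Ψ_r(X) = 1 + X + X² + ⋯ + X^(r−1), let r be an odd positive integer, and let t be an odd prime. If r ≡ −1 (mod 2t), then the cyclotomic polynomial Φ_{2t}(X) divides the composition Φ_t(Ψ_r(X)) in ℤ[X]. -/
open Polynomial

/-- Let `Ψ_r(X) = 1 + X + ⋯ + X^(r−1)`, let `r` be an odd positive integer, and let `t`
be an odd prime. If `r ≡ −1 (mod 2t)`, then `Φ_{2t}(X)` divides `Φ_t(Ψ_r(X))` in `ℤ[X]`. -/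
theorem cyclotomic_dvd_comp (r t : ℕ) (hr : 0 < r) (hro : Odd r) (ht : t.Prime)
    (hto : Odd t) (hmod : (r : ℤ) ≡ -1 [ZMOD (2 * t)]) :
    cyclotomic (2 * t) ℤ ∣ (cyclotomic t ℤ).comp (∑ i ∈ Finset.range r, (X : ℤ[X]) ^ i) := by
  have ht2 : 3 ≤ t := by
    rcases ht.two_le.lt_or_eq with h | h
    · omega
    · exfalso; rw [← h] at hto; exact (Nat.not_odd_iff_even.mpr even_two) hto
  have hn : 0 < 2 * t := by omega
  obtain ⟨ζ, hζ⟩ : ∃ ζ : ℂ, IsPrimitiveRoot ζ (2 * t) :=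
    ⟨_, Complex.isPrimitiveRoot_exp _ hn.ne'⟩
  have hint : IsIntegral ℤ ζ := hζ.isIntegral hn
  rw [cyclotomic_eq_minpoly hζ hn]
  apply minpoly.isIntegrallyClosed_dvd hint
  rw [aeval_comp]
  have hsum : (aeval ζ) (∑ i ∈ Finset.range r, (X : ℤ[X]) ^ i)
      = ∑ i ∈ Finset.range r, ζ ^ i := by
    simp
  rw [hsum]
  -- ζ ^ t = -1
  have hζt : ζ ^ t = -1 := by
    have h2 : IsPrimitiveRoot (ζ ^ t) 2 := hζ.pow hn (by ring)
    exact h2.eq_neg_one_of_two_right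
  -- 2t ∣ r + 1
  have hdvd : 2 * t ∣ r + 1 := by
    have h1 : ((2 * t : ℕ) : ℤ) ∣ (-1 : ℤ) - (r : ℤ) := by
      have := hmod.dvd
      push_cast at this ⊢
      convert this using 1
    have h2 : ((2 * t : ℕ) : ℤ) ∣ ((r + 1 : ℕ) : ℤ) := by
      have := h1.neg_right
      push_cast at this ⊢
      convert this using 1; rfl; ring
    exact_mod_cast h2
  have hζ0 : ζ ≠ 0 := hζ.ne_zero hn.ne'
  have hζ1 : ζ ≠ 1 := hζ.ne_one (by omega)
  have hζr : ζ ^ r * ζ = 1 := by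
    obtain ⟨k, hk⟩ := hdvd
    calc ζ ^ r * ζ = ζ ^ (r + 1) := by ring
    _ = (ζ ^ (2 * t)) ^ k := by rw [← pow_mul, hk]
    _ = 1 := by rw [hζ.pow_eq_one, one_pow]
  -- the geometric sum equals ζ ^ (t - 1)
  have hgeom : ∑ i ∈ Finset.range r, ζ ^ i = ζ ^ (t - 1) := by
    have h1 : (∑ i ∈ Finset.range r, ζ ^ i) * (ζ - 1) = ζ ^ r - 1 := geom_sum_mul ζ r
    have h2 : ζ ^ (t - 1) * (ζ - 1) = ζ ^ r - 1 := by
      have ht1 : ζ ^ (t - 1) * ζ = ζ ^ t := by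
        rw [← pow_succ]; congr 1; omega
      have key : (ζ ^ (t - 1) * (ζ - 1)) * ζ = (ζ ^ r - 1) * ζ := by
        have : ζ ^ r * ζ = 1 := hζr
        calc (ζ ^ (t - 1) * (ζ - 1)) * ζ = ζ ^ (t - 1) * ζ * ζ - ζ ^ (t - 1) * ζ := by ring
        _ = -ζ - (-1) := by rw [ht1, hζt]; ring
        _ = 1 - ζ := by ring
        _ = ζ ^ r * ζ - ζ := by rw [hζr]
        _ = (ζ ^ r - 1) * ζ := by ring
      exact mul_right_cancel₀ hζ0 key
    have := h1.trans h2.symm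
    exact mul_right_cancel₀ (sub_ne_zero.mpr hζ1) this
  rw [hgeom]
  -- ζ ^ (t - 1) is a primitive t-th root of unity
  have hξ : IsPrimitiveRoot (ζ ^ 2) t := hζ.pow hn rfl
  have htodd : t - 1 = 2 * ((t - 1) / 2) := by
    obtain ⟨k, hk⟩ := hto; omega
  have hcop : ((t - 1) / 2).Coprime t := by
    rw [Nat.coprime_comm]
    apply (Nat.Prime.coprime_iff_not_dvd ht).mpr
    intro hd
    have := Nat.le_of_dvd (by omega) hd
    omega
  have hz : IsPrimitiveRoot (ζ ^ (t - 1)) t := by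
    have := hξ.pow_of_coprime ((t - 1) / 2) hcop
    rwa [← pow_mul, ← htodd] at this
  have hroot : IsRoot (cyclotomic t ℂ) (ζ ^ (t - 1)) :=
    hz.isRoot_cyclotomic ht.pos
  rw [aeval_def, ← eval_map, map_cyclotomic]
  exact hroot
end
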